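/- Let α be a finite type with at least 3 elements. Then the pseudocentre of the symmetric group on α is the alternating group: P(Equiv.Perm α) = alternatingGroup α. -/

import Mathlib

/-- The pseudocentre of a group `G`: the intersection of the normal closures of the
centralizers of the elements of `G`. -/
def P (G : Type*) [Group G] : Subgroup G :=
  ⨅ g : G, Subgroup.normalClosure ↑(Subgroup.centralizer {g})

open Equiv Equiv.Perm Subgroup

section Aux

variable {α : Type*} [Fintype α] [DecidableEq α]

/-- Lower bound: the alternating group is contained in the normal closure of every
centralizer. -/
lemma alt_le_normalClosure_centralizer (h : 3 ≤ Fintype.card α) (g : Perm α) :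
    alternatingGroup α ≤ Subgroup.normalClosure (↑(centralizer {g}) : Set (Perm α)) := by
  set N := Subgroup.normalClosure (↑(centralizer {g}) : Set (Perm α)) with hN
  have hNnorm : N.Normal := normalClosure_normal
  -- a single three-cycle lies in N
  have key : ∃ t : Perm α, t.IsThreeCycle ∧ t ∈ N := by
    by_cases hg : g = 1
    · -- the centralizer is everything; any three-cycle is in it
      obtain ⟨s, -, hs3⟩ := Finset.exists_subset_card_eq
        (show 3 ≤ (Finset.univ : Finset α).card by simpa using h)
      obtain ⟨a, b, c, hab, hac, hbc, -⟩ := Finset.card_eq_three.mp hs3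
      refine ⟨swap a b * swap a c, isThreeCycle_swap_mul_swap_same hab hac hbc, ?_⟩
      apply subset_normalClosure
      rw [SetLike.mem_coe, Subgroup.mem_centralizer_singleton_iff, hg, mul_one, one_mul]
    · obtain ⟨a, ha⟩ : ∃ a, g a ≠ a := by
        by_contra hall
        push_neg at hall
        exact hg (Equiv.ext hall)
      set cy := g.cycleOf a with hcy
      have hcyc : cy.IsCycle := isCycle_cycleOf g ha
      have hcyN : cy ∈ N := by
        apply subset_normalClosure
        rw [SetLike.mem_coe, Subgroup.mem_centralizer_singleton_iff]
        exact (self_mem_cycle_factors_commute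
          (cycleOf_mem_cycleFactorsFinset_iff.mpr (mem_support.mpr ha))).eq
      rcases eq_or_lt_of_le hcyc.two_le_card_support with h2 | h3
      · -- cy is a transposition
        obtain ⟨x, y, hxy, hswap⟩ := card_support_eq_two.mp h2.symm
        obtain ⟨z, hzx, hzy⟩ : ∃ z, z ≠ x ∧ z ≠ y := by
          have hne : (({x, y} : Finset α)ᶜ).Nonempty := by
            rw [← Finset.card_pos, Finset.card_compl]
            have h2' : ({x, y} : Finset α).card ≤ 2 :=
              le_trans (Finset.card_insert_le _ _) (by simp)
            omega
          obtain ⟨z, hz⟩ := hne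
          simp only [Finset.mem_compl, Finset.mem_insert, Finset.mem_singleton, not_or] at hz
          exact ⟨z, hz.1, hz.2⟩
        refine ⟨swap x y * swap x z, isThreeCycle_swap_mul_swap_same hxy (Ne.symm hzx)
          (Ne.symm hzy), ?_⟩
        have hx' : Equiv.swap y z x = x :=
          swap_apply_of_ne_of_ne hxy (Ne.symm hzx)
        have hconj' : swap x z = swap y z * cy * (swap y z)⁻¹ := by
          rw [hswap, ← swap_apply_apply, hx', swap_apply_left]
        rw [hconj']
        exact mul_mem (hswap ▸ hcyN) (hNnorm.conj_mem cy hcyN (swap y z))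
      · -- cy has support of size at least three
        have h3' : 3 ≤ cy.support.card := h3
        have hca : cy a ≠ a := by
          rw [hcy, cycleOf_apply_self]; exact ha
        have hax : a ∈ cy.support := mem_support.mpr hca
        have hy_supp : cy a ∈ cy.support := apply_mem_support.mpr hax
        have hzy : cy (cy a) ≠ cy a := mem_support.mp hy_supp
        have hza : cy (cy a) ≠ a := by
          intro hza
          have h2 : (cy ^ 2) a = a := by
            rw [pow_two, Perm.mul_apply]; exact hza
          have hone : cy ^ 2 = 1 := (hcyc.pow_eq_one_iff' hca).mpr h2
          have hdvd : orderOf cy ∣ 2 := orderOf_dvd_of_pow_eq_one hone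
          have := Nat.le_of_dvd (by norm_num) hdvd
          rw [hcyc.orderOf] at this
          omega
        refine ⟨swap (cy a) (cy (cy a)) * swap (cy a) a,
          isThreeCycle_swap_mul_swap_same hzy.symm hca hza, ?_⟩
        have hconj : swap (cy a) (cy (cy a)) = cy * swap a (cy a) * cy⁻¹ :=
          swap_apply_apply cy a (cy a)
        have hmem : swap (cy a) (cy (cy a)) * swap (cy a) a
            = cy * (swap a (cy a) * cy⁻¹ * (swap a (cy a))⁻¹) := by
          rw [hconj, swap_inv, swap_comm (cy a) a]
          group
        rw [hmem]
        exact mul_mem hcyN (hNnorm.conj_mem _ (inv_mem hcyN) _)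
  -- from one three-cycle, all three-cycles are in N
  rw [← closure_three_cycles_eq_alternating]
  refine (Subgroup.closure_le _).mpr ?_
  rintro t' ht'
  obtain ⟨t, htc, htN⟩ := key
  obtain ⟨π, hπ⟩ := isConj_iff.mp
    (isConj_iff_cycleType_eq.mpr (htc.cycleType.trans ht'.cycleType.symm))
  rw [SetLike.mem_coe, ← hπ]
  exact hNnorm.conj_mem t htN π

/-- Upper bound: there is a permutation whose centralizer is contained in the
alternating group. -/
lemma exists_centralizer_subset_alt (h : 3 ≤ Fintype.card α) :
    ∃ g : Perm α, (↑(centralizer {g}) : Set (Perm α)) ⊆ ↑(alternatingGroup α) := by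
  obtain ⟨l, hnd, hlen3, hodd, hcompl⟩ : ∃ l : List α, l.Nodup ∧ 3 ≤ l.length ∧
      Odd l.length ∧ (l.toFinsetᶜ : Finset α).card ≤ 1 := by
    have hcardlist : (Finset.univ : Finset α).toList.length = Fintype.card α := by
      simp [Finset.length_toList]
    rcases Nat.even_or_odd (Fintype.card α) with he | ho
    · obtain ⟨k, hk⟩ := he
      refine ⟨(Finset.univ : Finset α).toList.tail, (Finset.nodup_toList _).tail, ?_, ?_, ?_⟩
      · rw [List.length_tail, hcardlist]; omega
      · rw [List.length_tail, hcardlist]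
        refine ⟨k - 1, by omega⟩
      · rw [Finset.card_compl, List.toFinset_card_of_nodup ((Finset.nodup_toList _).tail),
          List.length_tail, hcardlist]
        omega
    · refine ⟨(Finset.univ : Finset α).toList, Finset.nodup_toList _, ?_, ?_, ?_⟩
      · rw [hcardlist]; exact h
      · rw [hcardlist]; exact ho
      · simp
  have hlist : ∀ x : α, l ≠ [x] := by
    intro x hx
    rw [hx] at hlen3
    simp at hlen3
  set c := l.formPerm with hc
  have hcyc : c.IsCycle := List.isCycle_formPerm hnd (by omega)
  have hsupp : c.support = l.toFinset := List.support_formPerm_of_nodup l hnd hlist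
  have hcard : c.support.card = l.length := by
    rw [hsupp, List.toFinset_card_of_nodup hnd]
  have hsign : Equiv.Perm.sign c = 1 := by
    rw [hcyc.sign, hcard, hodd.neg_one_pow, neg_neg]
  have hcompl' : (c.supportᶜ : Finset α).card ≤ 1 := by
    rw [hsupp]; exact hcompl
  refine ⟨c, fun q hq => ?_⟩
  rw [SetLike.mem_coe, Subgroup.mem_centralizer_singleton_iff] at hq
  have hcom : Commute q c := hq
  obtain ⟨hc', hz⟩ := hcyc.commute_iff.mp hcom
  have heq : q = ofSubtype (q.subtypePerm hc') := by
    ext x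
    by_cases hx : x ∈ c.support
    · rw [ofSubtype_subtypePerm_of_mem hc' hx]
    · rw [ofSubtype_apply_of_not_mem _ hx]
      have hqx : q x ∉ c.support := fun hq' => hx ((hc' x).mp hq')
      exact Finset.card_le_one.mp hcompl' (q x) (Finset.mem_compl.mpr hqx) x
        (Finset.mem_compl.mpr hx)
  obtain ⟨k, hk⟩ := Subgroup.mem_zpowers_iff.mp hz
  have hsq : Equiv.Perm.sign q = 1 := by
    rw [heq, ← hk, map_zpow, hsign, one_zpow]
  exact Equiv.Perm.mem_alternatingGroup.mpr hsq

end Aux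

/-- For a finite type with at least 3 elements, the pseudocentre of the symmetric
group is the alternating group. -/
theorem pseudocentre_perm_eq_alternating (α : Type*) [Fintype α] [DecidableEq α]
    (h : 3 ≤ Fintype.card α) :
    P (Equiv.Perm α) = alternatingGroup α := by
  apply le_antisymm
  · obtain ⟨g, hg⟩ := exists_centralizer_subset_alt h
    exact le_trans (iInf_le _ g) (Subgroup.normalClosure_le_normal hg)
  · exact le_iInf fun g => alt_le_normalClosure_centralizer h g
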